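/- Let R be a G-graded ring, H a normal subgroup of G, and suppose G is a locally finite p-group with p nilpotent in R. If R is G/H-graded NR-clean, then the group ring R[H], viewed as a G/H-graded ring, is G/H-graded NR-clean. -/

import Mathlib

/-- An element is homogeneous w.r.t. a grading family `𝒜` if it lies in some component. -/
def Homogeneous {G : Type*} [Group G] {R : Type*} [Ring R]
    (𝒜 : G → AddSubgroup R) (x : R) : Prop := ∃ g, x ∈ 𝒜 g

/-- A graded-regular element: homogeneous `r` with `r = r * a * r` for some homogeneous `a`. -/
def GradedRegular {G : Type*} [Group G] {R : Type*} [Ring R]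
    (𝒜 : G → AddSubgroup R) (r : R) : Prop :=
  Homogeneous 𝒜 r ∧ ∃ a : R, Homogeneous 𝒜 a ∧ r = r * a * r

/-- Graded NR-clean: every homogeneous element is a sum of a graded-regular element
and a homogeneous nilpotent element. -/
def GradedNRClean {G : Type*} [Group G] {R : Type*} [Ring R]
    (𝒜 : G → AddSubgroup R) : Prop :=
  ∀ x : R, Homogeneous 𝒜 x →
    ∃ r n : R, GradedRegular 𝒜 r ∧ Homogeneous 𝒜 n ∧ IsNilpotent n ∧ x = r + n

/-- `𝒜` is a `G`-grading of the ring `R`. -/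
structure IsGrading {G : Type*} [Group G] [DecidableEq G] {R : Type*} [Ring R]
    (𝒜 : G → AddSubgroup R) : Prop where
  one_mem : (1 : R) ∈ 𝒜 1
  mul_mem : ∀ {g h : G} {a b : R}, a ∈ 𝒜 g → b ∈ 𝒜 h → a * b ∈ 𝒜 (g * h)
  isInternal : DirectSum.IsInternal 𝒜

/-- The `G/H`-grading on a `G`-graded ring `R`: the coset component `R_C = ⊕_{x ∈ C} R_x`. -/
def cosetComponent {G : Type*} [Group G] {R : Type*} [Ring R]
    (𝒜 : G → AddSubgroup R) (H : Subgroup G) [H.Normal] (C : G ⧸ H) : AddSubgroup R :=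
  ⨆ (x : G) (_ : (x : G ⧸ H) = C), 𝒜 x

/-- The `G/H`-grading on the group ring `R[H]`: the `C`-component consists of those
`∑ r_h h` with all coefficients `r_h ∈ R_C`. -/
def groupRingCosetComponent {G : Type*} [Group G] {R : Type*} [Ring R]
    (𝒜 : G → AddSubgroup R) (H : Subgroup G) [H.Normal] (C : G ⧸ H) :
    AddSubgroup (MonoidAlgebra R H) where
  carrier := {u | ∀ h : H, u.coeff h ∈ cosetComponent 𝒜 H C}
  zero_mem' := fun h => by simpa using zero_mem (cosetComponent 𝒜 H C)
  add_mem' := fun {a b} ha hb h => by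
    show (a + b).coeff h ∈ cosetComponent 𝒜 H C
    rw [MonoidAlgebra.coeff_add, Finsupp.add_apply]
    exact add_mem (ha h) (hb h)
  neg_mem' := fun {a} ha h => by
    show (-a).coeff h ∈ cosetComponent 𝒜 H C
    exact neg_mem (ha h)

/-! ### Auxiliary material -/

open DirectSum in
theorem _dummy_open_check : True := trivial

section AugDef

variable (R : Type*) [Ring R] (P : Type*) [Group P]

/-- The augmentation map `R[P] → R`. -/
noncomputable def myAug : MonoidAlgebra R P →+* R :=
  MonoidAlgebra.liftNCRingHom (RingHom.id R) 1 (fun _ _ => by simp)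

variable {R P}

@[simp] lemma myAug_single (h : P) (r : R) : myAug R P (MonoidAlgebra.single h r) = r := by
  simp [myAug, MonoidAlgebra.liftNCRingHom, MonoidAlgebra.liftNC_single]

lemma myAug_comp {Q : Type*} [Group Q] (f : P →* Q) :
    (myAug R Q).comp (MonoidAlgebra.mapDomainRingHom R f) = myAug R P := by
  apply MonoidAlgebra.ringHom_ext <;> intro a <;>
    simp [MonoidAlgebra.mapDomainRingHom, Finsupp.mapDomain_single]

lemma myAug_mem (S : AddSubgroup R) (u : MonoidAlgebra R P) (hu : ∀ h, u.coeff h ∈ S) :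
    myAug R P u ∈ S := by
  rw [← MonoidAlgebra.sum_coeff_single u, Finsupp.sum, map_sum]
  exact AddSubgroup.sum_mem _ fun h _ => by rw [myAug_single]; exact hu h

end AugDef

lemma sub_one_nilpotent' {A : Type*} [Ring A] {p : ℕ} (hp : p.Prime) {a : A} {k t : ℕ}
    (h1 : a ^ p ^ k = 1) (hpt : (p : A) ^ t = 0) : IsNilpotent (a - 1) := by
  have hc : Commute (a - 1) (1 : A) := Commute.one_right _
  have he := hc.add_pow_prime_pow_eq hp k
  rw [sub_add_cancel, h1, one_pow] at he
  set s := (a - 1) * 1 * ∑ i ∈ Finset.Ioo 0 (p ^ k),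
      (a - 1) ^ (i - 1) * (1 : A) ^ (p ^ k - i - 1) * ((p ^ k).choose i / p : ℕ) with hs
  have h2 : (a - 1) ^ p ^ k = -((p : A) * s) := by
    have h3 : (a - 1) ^ p ^ k + ((1 : A) + (p : A) * s) = 1 := by
      rw [← add_assoc]; simpa only [hs, mul_assoc] using he.symm
    rw [← eq_sub_iff_add_eq] at h3
    rw [h3]; abel
  refine ⟨p ^ k * t, ?_⟩
  rw [pow_mul, h2, neg_pow, (Nat.cast_commute p s).mul_pow, hpt, zero_mul, mul_zero]

lemma single_central {R : Type*} [Ring R] {P : Type*} [Group P] {z : P}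
    (hz : z ∈ Subgroup.center P) (w : MonoidAlgebra R P) :
    Commute (MonoidAlgebra.single z (1 : R)) w := by
  induction w using MonoidAlgebra.induction_linear with
  | zero => exact Commute.zero_right _
  | add f g hf hg => exact hf.add_right hg
  | single h r =>
    show MonoidAlgebra.single z (1 : R) * MonoidAlgebra.single h r
        = MonoidAlgebra.single h r * MonoidAlgebra.single z (1 : R)
    rw [MonoidAlgebra.single_mul_single, MonoidAlgebra.single_mul_single, one_mul, mul_one,
      Subgroup.mem_center_iff.mp hz h]

noncomputable def secQ (R : Type*) [Ring R] {P : Type*} [Group P] (N : Subgroup P)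
    [N.Normal] : MonoidAlgebra R (P ⧸ N) →+ MonoidAlgebra R P :=
  { toFun := MonoidAlgebra.mapDomain Quotient.out
    map_zero' := MonoidAlgebra.mapDomain_zero _
    map_add' := MonoidAlgebra.mapDomain_add _ }

lemma secQ_single (R : Type*) [Ring R] {P : Type*} [Group P] (N : Subgroup P)
    [N.Normal] (c : P ⧸ N) (r : R) :
    secQ R N (MonoidAlgebra.single c r) = MonoidAlgebra.single (Quotient.out c) r :=
  MonoidAlgebra.mapDomain_single

universe v

lemma myAug_nilpotent {R : Type*} [Ring R] {p t : ℕ} (hp : p.Prime) (hpt : (p : R) ^ t = 0) :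
    ∀ (m : ℕ) (P : Type v) [Group P] [Finite P], Nat.card P ≤ m → IsPGroup p P →
      ∀ x : MonoidAlgebra R P, myAug R P x = 0 → IsNilpotent x := by
  intro m
  induction m with
  | zero =>
    intro P _ _ hcard
    exact absurd (lt_of_lt_of_le Nat.card_pos hcard) (lt_irrefl 0)
  | succ m ih =>
    intro P _ _ hcard hP x hx
    haveI : Fact p.Prime := ⟨hp⟩
    rcases subsingleton_or_nontrivial P with hs | hn
    · have hx0 : x = MonoidAlgebra.single (1 : P) (x.coeff 1) := by
        ext h; rw [Subsingleton.elim h 1]; simp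
      rw [hx0, myAug_single] at hx
      exact ⟨1, by rw [pow_one, hx0, hx, MonoidAlgebra.single_zero]⟩
    · haveI := hP.center_nontrivial
      obtain ⟨⟨z, hz⟩, hz1⟩ := exists_ne (1 : Subgroup.center P)
      have hzne : z ≠ 1 := fun h => hz1 (Subtype.ext h)
      set N := Subgroup.zpowers z with hNdef
      haveI hNnorm : N.Normal := by
        refine ⟨fun a ha g => ?_⟩
        obtain ⟨k, rfl⟩ := Subgroup.mem_zpowers_iff.mp ha
        have hc : z ^ k ∈ Subgroup.center P := Subgroup.zpow_mem _ hz k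
        rw [Subgroup.mem_center_iff.mp hc g, mul_inv_cancel_right]
        exact Subgroup.mem_zpowers_iff.mpr ⟨k, rfl⟩
      have hNcard : 1 < Nat.card N := by
        refine Finite.one_lt_card_iff_nontrivial.mpr ⟨⟨z, Subgroup.mem_zpowers z⟩, 1, ?_⟩
        exact fun h => hzne (congrArg Subtype.val h)
      have hcQ : Nat.card (P ⧸ N) < Nat.card P := by
        have h1 := Subgroup.card_eq_card_quotient_mul_card_subgroup N
        have hq : 0 < Nat.card (P ⧸ N) := Nat.card_pos
        calc Nat.card (P ⧸ N) < Nat.card (P ⧸ N) * Nat.card N :=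
              (Nat.lt_mul_iff_one_lt_right hq).mpr hNcard
          _ = Nat.card P := h1.symm
      have hQle : Nat.card (P ⧸ N) ≤ m := by omega
      have hPQ : IsPGroup p (P ⧸ N) := hP.to_quotient N
      set π := MonoidAlgebra.mapDomainRingHom R (QuotientGroup.mk' N) with hπdef
      have haug : myAug R (P ⧸ N) (π x) = 0 := by
        have hcomp := myAug_comp (R := R) (QuotientGroup.mk' N)
        calc myAug R (P ⧸ N) (π x) = myAug R P x := by rw [← hcomp]; rfl
          _ = 0 := hx
      obtain ⟨mq, hmq⟩ := ih (P ⧸ N) hQle hPQ (π x) haug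
      have hπ0 : π (x ^ mq) = 0 := by rw [map_pow, hmq]
      set a : MonoidAlgebra R P := MonoidAlgebra.single z (1 : R) with hadef
      have hzfin : ∀ w : P, w ∈ N → ∃ j : ℕ, z ^ j = w := by
        intro w hw
        exact (Submonoid.mem_powers_iff w z).mp (mem_powers_iff_mem_zpowers.mpr hw)
      have hcomm : ∀ w, Commute a w := fun w => single_central hz w
      have key : ∀ v : MonoidAlgebra R P, ∃ y : MonoidAlgebra R P,
          v - secQ R N (π v) = (a - 1) * y := by
        intro v
        induction v using MonoidAlgebra.induction_linear with
        | zero => exact ⟨0, by simp⟩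
        | add f g hf hg =>
          obtain ⟨y1, h1⟩ := hf; obtain ⟨y2, h2⟩ := hg
          refine ⟨y1 + y2, ?_⟩
          rw [map_add, map_add, mul_add, ← h1, ← h2, add_sub_add_comm]
        | single h r =>
          have hπs : π (MonoidAlgebra.single h r)
              = MonoidAlgebra.single ((QuotientGroup.mk' N) h) r := by
            show MonoidAlgebra.mapDomain _ _ = _
            exact MonoidAlgebra.mapDomain_single
          set h₀ : P := Quotient.out ((QuotientGroup.mk' N) h : P ⧸ N) with hh₀
          have hmk : ((h₀ : P ⧸ N)) = (QuotientGroup.mk' N) h := QuotientGroup.out_eq' _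
          have hmem : h₀⁻¹ * h ∈ N := by
            rw [← QuotientGroup.eq]
            exact hmk
          obtain ⟨j, hj⟩ := hzfin _ hmem
          have hh : h = h₀ * z ^ j := by rw [hj, mul_inv_cancel_left]
          refine ⟨MonoidAlgebra.single h₀ (1 : R) * (∑ i ∈ Finset.range j, a ^ i)
            * MonoidAlgebra.single (1 : P) r, ?_⟩
          show MonoidAlgebra.single h r
              - secQ R N (π (MonoidAlgebra.single h r)) = _
          rw [hπs, secQ_single, ← hh₀]
          have hsplit : MonoidAlgebra.single h r
              = MonoidAlgebra.single h₀ (1 : R) * a ^ j * MonoidAlgebra.single (1 : P) r := by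
            rw [hadef, MonoidAlgebra.single_pow, one_pow, MonoidAlgebra.single_mul_single,
              MonoidAlgebra.single_mul_single, one_mul, one_mul, mul_one, ← hh]
          have h₀r : MonoidAlgebra.single h₀ r
              = MonoidAlgebra.single h₀ (1 : R) * (1 : MonoidAlgebra R P)
                * MonoidAlgebra.single (1 : P) r := by
            rw [mul_one, MonoidAlgebra.single_mul_single, mul_one, one_mul]
          rw [hsplit, h₀r, ← sub_mul, ← mul_sub]
          have hgeo : a ^ j - 1 = (a - 1) * ∑ i ∈ Finset.range j, a ^ i :=
            (mul_geom_sum a j).symm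
          rw [hgeo]
          have hc1 : Commute (a - 1) (MonoidAlgebra.single h₀ (1 : R)) :=
            (hcomm _).sub_left (Commute.one_left _)
          rw [← mul_assoc, ← hc1.eq, mul_assoc (a - 1), mul_assoc (a - 1)]
      obtain ⟨y, hy⟩ := key (x ^ mq)
      rw [hπ0, map_zero, sub_zero] at hy
      obtain ⟨k, hk⟩ := hP z
      have ha1 : a ^ p ^ k = 1 := by
        rw [hadef, MonoidAlgebra.single_pow, one_pow, hk]
        exact (MonoidAlgebra.one_def).symm
      have hpA : ((p : MonoidAlgebra R P)) ^ t = 0 := by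
        have h1 : (p : MonoidAlgebra R P) = MonoidAlgebra.singleOneRingHom (p : R) :=
          (map_natCast (MonoidAlgebra.singleOneRingHom : R →+* MonoidAlgebra R P) p).symm
        rw [h1, ← map_pow, hpt, map_zero]
      obtain ⟨e, he⟩ := sub_one_nilpotent' hp ha1 hpA
      have hxm : (x ^ mq) ^ e = 0 := by
        rw [hy, ((hcomm y).sub_left (Commute.one_left _)).mul_pow, he, zero_mul]
      exact ⟨mq * e, by rw [pow_mul, hxm]⟩

lemma nilpotent_transfer {G : Type*} [Group G] {R : Type*} [Ring R] (H : Subgroup G)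
    {p t : ℕ} (hp : p.Prime) (hpG : IsPGroup p G)
    (hlf : ∀ S : Set G, S.Finite → ((Subgroup.closure S : Subgroup G) : Set G).Finite)
    (hpt : (p : R) ^ t = 0) (v : MonoidAlgebra R H)
    (hv : IsNilpotent (myAug R H v)) : IsNilpotent v := by
  obtain ⟨k, hk⟩ := hv
  have hk' : myAug R H (v ^ k) = 0 := by rw [map_pow, hk]
  suffices hnil : IsNilpotent (v ^ k) by
    obtain ⟨m, hm⟩ := hnil
    exact ⟨k * m, by rw [pow_mul, hm]⟩
  set w := v ^ k with hw
  set T : Set H := ↑w.coeff.support with hT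
  set P : Subgroup H := Subgroup.closure T with hPdef
  have hTP : (↑w.coeff.support : Set H) ⊆ (P : Set H) := Subgroup.subset_closure
  have hmapfin : ((Subgroup.map H.subtype P : Subgroup G) : Set G).Finite := by
    rw [hPdef, MonoidHom.map_closure]
    exact hlf _ (w.coeff.support.finite_toSet.image _)
  haveI : Finite ↥(Subgroup.map H.subtype P) := hmapfin.to_subtype
  haveI hfin : Finite ↥P :=
    Finite.of_equiv _ (Subgroup.equivMapOfInjective P H.subtype H.subtype_injective).symm.toEquiv
  have hPp : IsPGroup p ↥P := (hpG.to_subgroup H).to_subgroup P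
  have hinj : Function.Injective (P.subtype) := P.subtype_injective
  set w' : MonoidAlgebra R ↥P := MonoidAlgebra.comapDomain P.subtype hinj w with hw'
  have hww : MonoidAlgebra.mapDomain (P.subtype) w' = w := by
    refine MonoidAlgebra.mapDomain_comapDomain ?_ hinj
    rw [Subgroup.coe_subtype, Subtype.range_coe]
    exact hTP
  have hwΦ : MonoidAlgebra.mapDomainRingHom R P.subtype w' = w := hww
  have hw'aug : myAug R ↥P w' = 0 := by
    have hcomp := myAug_comp (R := R) P.subtype
    calc myAug R ↥P w' = myAug R H (MonoidAlgebra.mapDomainRingHom R P.subtype w') := by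
          rw [← hcomp]; rfl
      _ = myAug R H w := by rw [hwΦ]
      _ = 0 := hk'
  obtain ⟨m, hm⟩ := myAug_nilpotent hp hpt (Nat.card ↥P) ↥P le_rfl hPp w' hw'aug
  exact ⟨m, by rw [← hwΦ, ← map_pow, hm, map_zero]⟩

lemma mem_cosetComponent' {G : Type*} [Group G] {R : Type*} [Ring R]
    (𝒜 : G → AddSubgroup R) (H : Subgroup G) [H.Normal] {g : G} {r : R} (hr : r ∈ 𝒜 g)
    {C : G ⧸ H} (hC : (g : G ⧸ H) = C) : r ∈ cosetComponent 𝒜 H C := by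
  exact (le_iSup₂ (f := fun (x : G) (_ : (x : G ⧸ H) = C) => 𝒜 x) g hC) hr

open DirectSum in
lemma coset_trichotomy {G : Type*} [Group G] [DecidableEq G] {R : Type*} [Ring R]
    (𝒜 : G → AddSubgroup R) (hG : IsGrading 𝒜) (H : Subgroup G) [H.Normal]
    {C Cr Cn : G ⧸ H} {x r n : R}
    (hx : x ∈ cosetComponent 𝒜 H C) (hr : r ∈ cosetComponent 𝒜 H Cr)
    (hn : n ∈ cosetComponent 𝒜 H Cn) (hxe : x = r + n) :
    r ∈ cosetComponent 𝒜 H C ∨ x = 0 ∨ r = 0 := by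
  classical
  set e : (⨁ g, 𝒜 g) ≃+ R := AddEquiv.ofBijective (DirectSum.coeAddMonoidHom 𝒜) hG.isInternal
    with hedef
  set D := e.symm with hDdef
  have hM1 : ∀ (g : G) (w : R) (hw : w ∈ 𝒜 g),
      D w = DirectSum.of (fun i => ↥(𝒜 i)) g ⟨w, hw⟩ := by
    intro g w hw
    rw [hDdef, AddEquiv.symm_apply_eq]
    exact (DirectSum.coeAddMonoidHom_of 𝒜 g ⟨w, hw⟩).symm
  have hM2 : ∀ (C' : G ⧸ H) (w : R), w ∈ cosetComponent 𝒜 H C' →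
      ∀ g : G, (g : G ⧸ H) ≠ C' → D w g = 0 := by
    intro C'
    set S' : AddSubgroup R :=
      { carrier := {w | ∀ g : G, (g : G ⧸ H) ≠ C' → D w g = 0}
        zero_mem' := fun g _ => by rw [map_zero]; rfl
        add_mem' := fun {w₁ w₂} h1 h2 g hg => by
          rw [map_add, DirectSum.add_apply, h1 g hg, h2 g hg, add_zero]
        neg_mem' := fun {w₁} h1 g hg => by
          rw [show (-w₁ : R) = 0 - w₁ by rw [zero_sub], map_sub, DirectSum.sub_apply,
            map_zero, h1 g hg, DirectSum.zero_apply, sub_zero] } with hS'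
    have hle : cosetComponent 𝒜 H C' ≤ S' := by
      refine iSup₂_le ?_
      intro g0 hg0 w hw g hg
      rw [hM1 g0 w hw]
      exact DirectSum.of_eq_of_ne _ _ _ (fun hgg => hg (hgg ▸ hg0))
    exact fun w hw => hle hw
  have hzero : ∀ w : R, D w = 0 → w = 0 := by
    intro w hw
    have : w = e (D w) := (e.apply_symm_apply w).symm
    rw [this, hw, map_zero]
  by_cases hCr : Cr = C
  · exact Or.inl (hCr ▸ hr)
  by_cases hCn : Cn = Cr
  · refine Or.inr (Or.inl (hzero x ?_))
    refine DFinsupp.ext fun g => ?_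
    show D x g = 0
    by_cases hgC : (g : G ⧸ H) = C
    · have hg1 : (g : G ⧸ H) ≠ Cr := by rw [hgC]; exact fun h => hCr h.symm
      have h3 : D x g = D r g + D n g := by
        rw [hxe, map_add]; exact DirectSum.add_apply _ _ _
      rw [h3, hM2 Cr r hr g hg1, hM2 Cr n (hCn ▸ hn) g hg1, add_zero]
    · exact hM2 C x hx g hgC
  · refine Or.inr (Or.inr (hzero r ?_))
    refine DFinsupp.ext fun g => ?_
    show D r g = 0
    by_cases hgr : (g : G ⧸ H) = Cr
    · have h1 : D x g = 0 := hM2 C x hx g (by rw [hgr]; exact fun h => hCr h)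
      have h2 : D n g = 0 := hM2 Cn n hn g (by rw [hgr]; exact fun h => hCn h.symm)
      have h3 : D x g = D r g + D n g := by
        rw [hxe, map_add]; exact DirectSum.add_apply _ _ _
      rw [h2, add_zero] at h3
      rw [h1] at h3
      exact h3.symm
    · exact hM2 Cr r hr g hgr

/-- If `G` is a locally finite `p`-group with `p` nilpotent in `R`, `H` is a
normal subgroup of `G`, and `R` is `G/H`-graded NR-clean, then the group ring `R[H]`
is `G/H`-graded NR-clean. -/
theorem stmt15 {G : Type*} [Group G] [DecidableEq G] {R : Type*} [Ring R]
    (𝒜 : G → AddSubgroup R) (hG : IsGrading 𝒜) (H : Subgroup G) [H.Normal]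
    (p : ℕ) (hp : p.Prime) (hpG : IsPGroup p G)
    (hlf : ∀ S : Set G, S.Finite → ((Subgroup.closure S : Subgroup G) : Set G).Finite)
    (hpR : IsNilpotent (p : R))
    (h : GradedNRClean (cosetComponent 𝒜 H)) :
    GradedNRClean (groupRingCosetComponent 𝒜 H) := by
  obtain ⟨t, hpt⟩ := hpR
  intro u hu
  obtain ⟨C, hC⟩ := hu
  have hCmem : ∀ hh : H, u.coeff hh ∈ cosetComponent 𝒜 H C := hC
  set x := myAug R H u with hxdef
  have hxmem : x ∈ cosetComponent 𝒜 H C := myAug_mem _ u hCmem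
  obtain ⟨r, n, ⟨⟨Cr, hrmem⟩, a, ⟨Ca, hamem⟩, hra⟩, ⟨Cn, hnmem⟩, hnnil, hxe⟩ :=
    h x ⟨C, hxmem⟩
  have nil_route : IsNilpotent x →
      ∃ r' n' : MonoidAlgebra R H, GradedRegular (groupRingCosetComponent 𝒜 H) r' ∧
        Homogeneous (groupRingCosetComponent 𝒜 H) n' ∧ IsNilpotent n' ∧ u = r' + n' := by
    intro hxnil
    have hunil : IsNilpotent u := nilpotent_transfer H hp hpG hlf hpt u hxnil
    exact ⟨0, u, ⟨⟨C, zero_mem _⟩, 0, ⟨C, zero_mem _⟩, by simp⟩, ⟨C, hCmem⟩, hunil,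
      (zero_add u).symm⟩
  rcases coset_trichotomy 𝒜 hG H hxmem hrmem hnmem hxe with hrC | hx0 | hr0
  · refine ⟨MonoidAlgebra.single 1 r, u - MonoidAlgebra.single 1 r, ?_, ?_, ?_, ?_⟩
    · refine ⟨⟨C, ?_⟩, MonoidAlgebra.single 1 a, ⟨Ca, ?_⟩, ?_⟩
      · intro hh
        by_cases h1 : (1 : H) = hh
        · rw [← h1, MonoidAlgebra.coeff_single, Finsupp.single_eq_same]; exact hrC
        · rw [MonoidAlgebra.coeff_single, Finsupp.single_eq_of_ne' h1]; exact zero_mem _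
      · intro hh
        by_cases h1 : (1 : H) = hh
        · rw [← h1, MonoidAlgebra.coeff_single, Finsupp.single_eq_same]; exact hamem
        · rw [MonoidAlgebra.coeff_single, Finsupp.single_eq_of_ne' h1]; exact zero_mem _
      · rw [MonoidAlgebra.single_mul_single, MonoidAlgebra.single_mul_single, mul_one, mul_one]
        exact congrArg _ hra
    · refine ⟨C, fun hh => ?_⟩
      rw [MonoidAlgebra.coeff_sub, Finsupp.sub_apply]
      by_cases h1 : (1 : H) = hh
      · rw [← h1, MonoidAlgebra.coeff_single, Finsupp.single_eq_same]
        exact sub_mem (hCmem 1) hrC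
      · rw [MonoidAlgebra.coeff_single, Finsupp.single_eq_of_ne' h1, sub_zero]
        exact hCmem hh
    · apply nilpotent_transfer H hp hpG hlf hpt
      have haug : myAug R H (u - MonoidAlgebra.single 1 r) = n := by
        rw [map_sub, myAug_single, ← hxdef, hxe, add_sub_cancel_left]
      rw [haug]; exact hnnil
    · abel
  · exact nil_route ⟨1, by rw [pow_one, hx0]⟩
  · exact nil_route (by rw [hxe, hr0, zero_add]; exact hnnil)
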